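/- Let (X,S) be a non-degenerate symmetric solution satisfying Property (C). Then the subgroup N of the structure group G(X,S) generated by the frozen elements is a normal subgroup and is free Abelian of rank n = |X|, freely generated by the frozen elements. -/

import Mathlib

/-- Relators of the structure group presentation `⟨X ∣ xy = g_x(y) f_y(x)⟩`. -/
def structGrpRels {X : Type*} (g f : X → X → X) : Set (FreeGroup X) :=
  {w | ∃ x y : X, w = FreeGroup.of x * FreeGroup.of y *
      (FreeGroup.of (g x y) * FreeGroup.of (f y x))⁻¹}

/-- `S` acting on the first two components of `X³`. -/
def S12 {X : Type*} (S : X × X → X × X) : X × X × X → X × X × X :=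
  fun p => ((S (p.1, p.2.1)).1, (S (p.1, p.2.1)).2, p.2.2)

/-- `S` acting on the last two components of `X³`. -/
def S23 {X : Type*} (S : X × X → X × X) : X × X × X → X × X × X :=
  fun p => (p.1, (S (p.2.1, p.2.2)).1, (S (p.2.1, p.2.2)).2)

/-- The braid relation `S¹²S²³S¹² = S²³S¹²S²³`. -/
def Braided {X : Type*} (S : X × X → X × X) : Prop :=
  S12 S ∘ S23 S ∘ S12 S = S23 S ∘ S12 S ∘ S23 S
/-- Property (C): for every frozen pair `(x,y)` (i.e. `S(x,y) = (x,y)`), one has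
`g_x ∘ g_y = id` and `f_y ∘ f_x = id`. -/
def PropertyC {X : Type*} (S : X × X → X × X) (g f : X → X → X) : Prop :=
  ∀ x y : X, S (x, y) = (x, y) →
    (∀ z : X, g x (g y z) = z) ∧ (∀ z : X, f y (f x z) = z)

namespace Stmt17Aux

variable {X : Type*} (S : X × X → X × X) (g f : X → X → X)

theorem ybe_g (hS : ∀ x y : X, S (x, y) = (g x y, f y x)) (hbr : Braided S)
    (x y z : X) : g (g x y) (g (f y x) z) = g x (g y z) := by
  have hbr' : S12 S ∘ S23 S ∘ S12 S = S23 S ∘ S12 S ∘ S23 S := hbr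
  have h := congrFun hbr' (x, y, z)
  simp only [Function.comp_apply, S12, S23, hS] at h
  exact congrArg Prod.fst h

theorem inv_gf (hS : ∀ x y : X, S (x, y) = (g x y, f y x))
    (hinv : ∀ p : X × X, S (S p) = p) (x y : X) :
    g (g x y) (f y x) = x := by
  have h := hinv (x, y)
  rw [hS, hS] at h
  exact congrArg Prod.fst h

theorem relG (x y : X) :
    (PresentedGroup.of x : PresentedGroup (structGrpRels g f)) * PresentedGroup.of y
      = PresentedGroup.of (g x y) * PresentedGroup.of (f y x) := by
  have hmem : (FreeGroup.of x * FreeGroup.of y *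
      (FreeGroup.of (g x y) * FreeGroup.of (f y x))⁻¹ : FreeGroup X)
      ∈ Subgroup.normalClosure (structGrpRels g f) :=
    Subgroup.subset_normalClosure ⟨x, y, rfl⟩
  have h1 : (PresentedGroup.mk (structGrpRels g f)) (FreeGroup.of x * FreeGroup.of y *
      (FreeGroup.of (g x y) * FreeGroup.of (f y x))⁻¹) = 1 :=
    (QuotientGroup.eq_one_iff _).mpr hmem
  rw [map_mul, map_inv, map_mul, map_mul, mul_inv_eq_one] at h1
  exact h1

variable [DecidableEq X] (hg : ∀ x : X, Function.Bijective (g x))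

noncomputable def sg (x : X) : X ≃ X := Equiv.ofBijective (g x) (hg x)

noncomputable def phi (x : X) : Equiv.Perm (X → ℤ) :=
  (Equiv.arrowCongr (sg g hg x) (Equiv.refl ℤ)).trans (Equiv.addLeft (Pi.single x 1))

theorem phi_apply (x : X) (v : X → ℤ) (t : X) :
    phi g hg x v t = (if t = x then 1 else 0) + v ((sg g hg x).symm t) := by
  simp [phi, Equiv.arrowCongr, sg, Pi.single_apply]

omit [DecidableEq X] in
theorem sg_symm_eq (x a t : X) : (sg g hg x).symm t = a ↔ t = g x a := by
  rw [Equiv.symm_apply_eq]; rfl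

omit [DecidableEq X] in
theorem g_sg_symm (x t : X) : g x ((sg g hg x).symm t) = t :=
  (sg g hg x).apply_symm_apply t

theorem phi_rel (hS : ∀ x y : X, S (x, y) = (g x y, f y x))
    (hinv : ∀ p : X × X, S (S p) = p) (hbr : Braided S) (x y : X) :
    phi g hg x * phi g hg y = phi g hg (g x y) * phi g hg (f y x) := by
  apply Equiv.ext
  intro v
  funext t
  have hcomp : (sg g hg (f y x)).symm ((sg g hg (g x y)).symm t)
      = (sg g hg y).symm ((sg g hg x).symm t) := by
    apply (hg (f y x)).1
    apply (hg (g x y)).1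
    rw [g_sg_symm g hg (f y x), g_sg_symm g hg (g x y), ybe_g S g f hS hbr,
      g_sg_symm g hg y, g_sg_symm g hg x]
  simp only [Equiv.Perm.mul_apply, phi_apply, hcomp, sg_symm_eq, inv_gf S g f hS hinv]
  ring

theorem hrels (hS : ∀ x y : X, S (x, y) = (g x y, f y x))
    (hinv : ∀ p : X × X, S (S p) = p) (hbr : Braided S) :
    ∀ r ∈ structGrpRels g f, FreeGroup.lift (phi g hg) r = 1 := by
  rintro r ⟨x, y, rfl⟩
  rw [map_mul, map_inv, map_mul, map_mul, mul_inv_eq_one,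
    FreeGroup.lift_apply_of, FreeGroup.lift_apply_of, FreeGroup.lift_apply_of,
    FreeGroup.lift_apply_of]
  exact phi_rel S g f hg hS hinv hbr x y

end Stmt17Aux

open Stmt17Aux in
/-- under Property (C), the subgroup `N` of the structure group `G(X,S)`
generated by the `n` frozen elements is normal and free Abelian of rank `n = |X|`, freely
generated by the frozen elements: they pairwise commute, and a product of frozen elements and
their inverses is determined exactly by the signed number of occurrences of each generator. -/
theorem stmt_17 {X : Type*} [Fintype X] [DecidableEq X]
    (S : X × X → X × X) (g f : X → X → X)
    (hS : ∀ x y : X, S (x, y) = (g x y, f y x))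
    (hg : ∀ x : X, Function.Bijective (g x))
    (hf : ∀ x : X, Function.Bijective (f x))
    (hinv : ∀ p : X × X, S (S p) = p)
    (hbr : Braided S)
    (hC : PropertyC S g f)
    (yf : X → X) (hyf : ∀ x : X, S (x, yf x) = (x, yf x)) :
    letI θ : X → PresentedGroup (structGrpRels g f) := fun x =>
      PresentedGroup.of x * PresentedGroup.of (yf x)
    (Subgroup.closure (Set.range θ)).Normal ∧
      (∀ x x' : X, Commute (θ x) (θ x')) ∧
      ∀ l l' : List (X × Bool),
        (l.map fun p => if p.2 then θ p.1 else (θ p.1)⁻¹).prod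
            = (l'.map fun p => if p.2 then θ p.1 else (θ p.1)⁻¹).prod →
          ∀ x : X,
            (l.count (x, true) : ℤ) - (l.count (x, false) : ℤ)
              = (l'.count (x, true) : ℤ) - (l'.count (x, false) : ℤ) := by
  set G := PresentedGroup (structGrpRels g f) with hG
  set θ : X → G := fun x => PresentedGroup.of x * PresentedGroup.of (yf x) with hθ0
  have hθ : ∀ x : X, θ x = PresentedGroup.of x * PresentedGroup.of (yf x) := fun _ => rfl
  -- frozen-pair facts
  have hgyf : ∀ x : X, g x (yf x) = x := by
    intro x
    have h := hyf x
    rw [hS] at h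
    exact congrArg Prod.fst h
  have hCg : ∀ x z : X, g x (g (yf x) z) = z := fun x => (hC x (yf x) (hyf x)).1
  have hCf : ∀ x z : X, f (yf x) (f x z) = z := fun x => (hC x (yf x) (hyf x)).2
  -- the key conjugation identity
  have key : ∀ z x : X, (PresentedGroup.of z : G) * θ x = θ (g z x) * PresentedGroup.of z := by
    intro z x
    have e3 : g (f x z) (yf x) = yf (g z x) := by
      apply (hg (g z x)).1
      rw [hgyf, ybe_g S g f hS hbr, hgyf]
    calc (PresentedGroup.of z : G) * θ x
        = (PresentedGroup.of z * PresentedGroup.of x) * PresentedGroup.of (yf x) := by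
          rw [hθ, mul_assoc]
      _ = PresentedGroup.of (g z x) *
            (PresentedGroup.of (f x z) * PresentedGroup.of (yf x)) := by
          rw [relG g f z x, mul_assoc]
      _ = PresentedGroup.of (g z x) *
            (PresentedGroup.of (g (f x z) (yf x)) * PresentedGroup.of (f (yf x) (f x z))) := by
          rw [relG g f (f x z) (yf x)]
      _ = θ (g z x) * PresentedGroup.of z := by
          rw [e3, hCf x z, hθ, mul_assoc]
  have key' : ∀ z x : X, (PresentedGroup.of z : G) * θ x * (PresentedGroup.of z)⁻¹
      = θ (g z x) := by
    intro z x; rw [key z x, mul_inv_cancel_right]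
  -- commutation
  have hcomm : ∀ x x' : X, Commute (θ x) (θ x') := by
    intro x x'
    have c1 : θ x * θ x' * (θ x)⁻¹ = θ x' := by
      have h1 : θ x * θ x' * (θ x)⁻¹ = PresentedGroup.of x *
          (PresentedGroup.of (yf x) * θ x' * (PresentedGroup.of (yf x))⁻¹) *
          (PresentedGroup.of x)⁻¹ := by
        rw [hθ x]; group
      rw [h1, key' (yf x) x', key' x (g (yf x) x'), hCg x x']
    exact mul_inv_eq_iff_eq_mul.mp c1
  -- conjugation of frozen elements by arbitrary group elements
  have conj_all : ∀ a : G, ∀ x : X,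
      (∃ x', a * θ x * a⁻¹ = θ x') ∧ (∃ x', a⁻¹ * θ x * a = θ x') := by
    intro a
    have ha : a ∈ Subgroup.closure (Set.range (PresentedGroup.of : X → G)) := by
      rw [PresentedGroup.closure_range_of]; exact Subgroup.mem_top a
    induction ha using Subgroup.closure_induction with
    | mem b hb =>
      obtain ⟨z, rfl⟩ := hb
      intro x
      constructor
      · exact ⟨g z x, key' z x⟩
      · obtain ⟨x₀, rfl⟩ := (hg z).2 x
        refine ⟨x₀, ?_⟩
        rw [← key' z x₀, mul_assoc, mul_assoc, mul_assoc, inv_mul_cancel_left,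
          inv_mul_cancel, mul_one]
    | one => intro x; exact ⟨⟨x, by simp⟩, ⟨x, by simp⟩⟩
    | mul b c _ _ ihb ihc =>
      intro x
      constructor
      · obtain ⟨x1, h1⟩ := (ihc x).1
        obtain ⟨x2, h2⟩ := (ihb x1).1
        refine ⟨x2, ?_⟩
        rw [← h2, ← h1]; group
      · obtain ⟨x1, h1⟩ := (ihb x).2
        obtain ⟨x2, h2⟩ := (ihc x1).2
        refine ⟨x2, ?_⟩
        rw [← h2, ← h1]; group
    | inv b _ ihb =>
      intro x
      exact ⟨(ihb x).2.imp fun x' h => by rwa [inv_inv],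
        (ihb x).1.imp fun x' h => by rwa [inv_inv]⟩
  -- normality
  have hnormal : (Subgroup.closure (Set.range θ)).Normal := by
    constructor
    intro n hn a
    induction hn using Subgroup.closure_induction with
    | mem b hb =>
      obtain ⟨x, rfl⟩ := hb
      obtain ⟨x', hx'⟩ := (conj_all a x).1
      rw [hx']
      exact Subgroup.subset_closure ⟨x', rfl⟩
    | one => simpa using Subgroup.one_mem _
    | mul b c _ _ ihb ihc =>
      have : a * (b * c) * a⁻¹ = (a * b * a⁻¹) * (a * c * a⁻¹) := by group
      rw [this]; exact Subgroup.mul_mem _ ihb ihc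
    | inv b _ ihb =>
      have : a * b⁻¹ * a⁻¹ = (a * b * a⁻¹)⁻¹ := by group
      rw [this]; exact Subgroup.inv_mem _ ihb
  refine ⟨hnormal, hcomm, ?_⟩
  -- the counting homomorphism
  set ψ : G →* Equiv.Perm (X → ℤ) :=
    PresentedGroup.toGroup (hrels S g f hg hS hinv hbr) with hψ
  have ψof : ∀ x : X, ψ (PresentedGroup.of x) = phi g hg x := fun _ =>
    PresentedGroup.toGroup.of _
  have ψθ : ∀ x : X, ∀ v : X → ℤ, ∀ t : X,
      ψ (θ x) v t = v t + (if t = x then 2 else 0) := by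
    intro x v t
    have hcomp : (sg g hg (yf x)).symm ((sg g hg x).symm t) = t := by
      apply (hg (yf x)).1
      apply (hg x).1
      rw [g_sg_symm g hg (yf x), g_sg_symm g hg x, hCg]
    rw [hθ, map_mul, ψof, ψof]
    simp only [Equiv.Perm.mul_apply, phi_apply, hcomp, sg_symm_eq, hgyf]
    split_ifs <;> ring
  have ψθinv : ∀ x : X, ∀ v : X → ℤ, ∀ t : X,
      ψ ((θ x)⁻¹) v t = v t - (if t = x then 2 else 0) := by
    intro x v t
    have h : ψ (θ x) (ψ ((θ x)⁻¹) v) t = v t := by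
      rw [← Equiv.Perm.mul_apply, ← map_mul, mul_inv_cancel, map_one, Equiv.Perm.one_apply]
    rw [ψθ] at h
    omega
  -- evaluation of products of frozen generators
  have evalL : ∀ l : List (X × Bool), ∀ v : X → ℤ, ∀ t : X,
      ψ ((l.map fun p => if p.2 then θ p.1 else (θ p.1)⁻¹).prod) v t
        = v t + 2 * ((l.count (t, true) : ℤ) - (l.count (t, false) : ℤ)) := by
    intro l
    induction l with
    | nil => intro v t; simp
    | cons p l ih =>
      intro v t
      obtain ⟨a, b⟩ := p
      rw [List.map_cons, List.prod_cons, map_mul, Equiv.Perm.mul_apply]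
      cases b with
      | true =>
        rw [if_pos rfl, ψθ, ih]
        simp only [List.count_cons, beq_iff_eq, Prod.mk.injEq, Bool.true_eq_false,
          Bool.false_eq_true, and_false, and_true, if_false]
        by_cases ht : t = a
        · rw [if_pos ht, if_pos ht.symm]; push_cast; ring
        · rw [if_neg ht, if_neg (fun h => ht h.symm)]; push_cast; ring
      | false =>
        rw [if_neg Bool.false_ne_true, ψθinv, ih]
        simp only [List.count_cons, beq_iff_eq, Prod.mk.injEq, Bool.true_eq_false,
          Bool.false_eq_true, and_false, and_true, if_false]
        by_cases ht : t = a
        · rw [if_pos ht, if_pos ht.symm]; push_cast; ring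
        · rw [if_neg ht, if_neg (fun h => ht h.symm)]; push_cast; ring
  intro l l' hll x
  have h1 := evalL l 0 x
  have h2 := evalL l' 0 x
  rw [hll, h2] at h1
  omega
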